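/- Let G be a distribution function on ℝ and define Λ_G((s₁,t₁),(s₂,t₂)) = G(s₁)G(t₂)[G(s₂∧t₁) − G(s₂)G(t₁)] + G(s₂)G(t₁)[G(s₁∧t₂) − G(s₁)G(t₂)] + G(s₁∧s₂)G(t₁∧t₂) − G(s₁)G(s₂)G(t₁)G(t₂). If (U_i)_{i∈ℕ} is an i.i.d. sequence with distribution function G, then Λ_G((s₁,t₁),(s₂,t₂)) equals the long-run covariance ∑_{k=−1,0,1} Cov(1(U₁ ≤ s₁, U₂ ≤ t₁), 1(U_{1+k} ≤ s₂, U_{2+k} ≤ t₂)). -/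

import Mathlib

open MeasureTheory

noncomputable def cdfOf (μ : Measure ℝ) (x : ℝ) : ℝ := (μ (Set.Iic x)).toReal

noncomputable def pairInd (s t : ℝ) (a b : Fin 4) (u : Fin 4 → ℝ) : ℝ :=
  if u a ≤ s ∧ u b ≤ t then 1 else 0

noncomputable def cov4 (μ : Measure ℝ) (f g : (Fin 4 → ℝ) → ℝ) : ℝ :=
  ∫ u, f u * g u ∂(Measure.pi fun _ : Fin 4 => μ) -
    (∫ u, f u ∂(Measure.pi fun _ : Fin 4 => μ)) * ∫ u, g u ∂(Measure.pi fun _ : Fin 4 => μ)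

lemma pi_integral4 (μ : Measure ℝ) [SigmaFinite μ] (f : Fin 4 → ℝ → ℝ) :
    ∫ u, ∏ i, f i (u i) ∂(Measure.pi fun _ : Fin 4 => μ) = ∏ i, ∫ x, f i x ∂μ := by
  letI : MeasureSpace ℝ := ⟨μ⟩
  letI : SigmaFinite (volume : Measure ℝ) := ‹SigmaFinite μ›
  exact integral_fintype_prod_eq_prod (μ := fun _ : Fin 4 => μ) f

noncomputable def ind (s x : ℝ) : ℝ := if x ≤ s then 1 else 0

lemma mul_ind (p q : Prop) [Decidable p] [Decidable q] :
    (if p then (1:ℝ) else 0) * (if q then 1 else 0) = if p ∧ q then 1 else 0 := by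
  split_ifs <;> simp_all

lemma int_ind (μ : Measure ℝ) (s : ℝ) : ∫ x, ind s x ∂μ = cdfOf μ s := by
  have : (fun x => ind s x) = Set.indicator (Set.Iic s) (fun _ => (1:ℝ)) := by
    funext x; simp [ind, Set.indicator, Set.mem_Iic]
  rw [this]
  simpa only [cdfOf, Measure.real, Pi.one_def] using integral_indicator_one (μ := μ) (measurableSet_Iic (a := s))

theorem stmt_17 (μ : Measure ℝ) [IsProbabilityMeasure μ] (s₁ t₁ s₂ t₂ : ℝ) :
    cdfOf μ s₁ * cdfOf μ t₂ * (cdfOf μ (min s₂ t₁) - cdfOf μ s₂ * cdfOf μ t₁)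
        + cdfOf μ s₂ * cdfOf μ t₁ * (cdfOf μ (min s₁ t₂) - cdfOf μ s₁ * cdfOf μ t₂)
        + cdfOf μ (min s₁ s₂) * cdfOf μ (min t₁ t₂)
        - cdfOf μ s₁ * cdfOf μ s₂ * cdfOf μ t₁ * cdfOf μ t₂
      = cov4 μ (pairInd s₁ t₁ 1 2) (pairInd s₂ t₂ 0 1)
        + cov4 μ (pairInd s₁ t₁ 1 2) (pairInd s₂ t₂ 1 2)
        + cov4 μ (pairInd s₁ t₁ 1 2) (pairInd s₂ t₂ 2 3) := by
  have hone : ∫ x, (1:ℝ) ∂μ = 1 := by simp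
  have hX : (∫ u, pairInd s₁ t₁ 1 2 u ∂(Measure.pi fun _ : Fin 4 => μ))
      = cdfOf μ s₁ * cdfOf μ t₁ := by
    have h : (fun u : Fin 4 → ℝ => pairInd s₁ t₁ 1 2 u)
        = fun u => ∏ i, ![fun _ => (1:ℝ), ind s₁, ind t₁, fun _ => 1] i (u i) := by
      funext u
      simp only [pairInd, ind, Fin.prod_univ_four, Matrix.cons_val_zero, Matrix.cons_val_one,
        Matrix.head_cons, Matrix.cons_val_two, Matrix.tail_cons, Matrix.cons_val_three,
        mul_ind, mul_one, one_mul]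
    rw [h, pi_integral4]
    simp only [Fin.prod_univ_four, Matrix.cons_val_zero, Matrix.cons_val_one, Matrix.head_cons,
      Matrix.cons_val_two, Matrix.tail_cons, Matrix.cons_val_three, int_ind, hone]
    ring
  have hY01 : (∫ u, pairInd s₂ t₂ 0 1 u ∂(Measure.pi fun _ : Fin 4 => μ))
      = cdfOf μ s₂ * cdfOf μ t₂ := by
    have h : (fun u : Fin 4 → ℝ => pairInd s₂ t₂ 0 1 u)
        = fun u => ∏ i, ![ind s₂, ind t₂, fun _ => (1:ℝ), fun _ => 1] i (u i) := by
      funext u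
      simp only [pairInd, ind, Fin.prod_univ_four, Matrix.cons_val_zero, Matrix.cons_val_one,
        Matrix.head_cons, Matrix.cons_val_two, Matrix.tail_cons, Matrix.cons_val_three,
        mul_ind, mul_one, one_mul]
    rw [h, pi_integral4]
    simp only [Fin.prod_univ_four, Matrix.cons_val_zero, Matrix.cons_val_one, Matrix.head_cons,
      Matrix.cons_val_two, Matrix.tail_cons, Matrix.cons_val_three, int_ind, hone]
    ring
  have hY12 : (∫ u, pairInd s₂ t₂ 1 2 u ∂(Measure.pi fun _ : Fin 4 => μ))
      = cdfOf μ s₂ * cdfOf μ t₂ := by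
    have h : (fun u : Fin 4 → ℝ => pairInd s₂ t₂ 1 2 u)
        = fun u => ∏ i, ![fun _ => (1:ℝ), ind s₂, ind t₂, fun _ => 1] i (u i) := by
      funext u
      simp only [pairInd, ind, Fin.prod_univ_four, Matrix.cons_val_zero, Matrix.cons_val_one,
        Matrix.head_cons, Matrix.cons_val_two, Matrix.tail_cons, Matrix.cons_val_three,
        mul_ind, mul_one, one_mul]
    rw [h, pi_integral4]
    simp only [Fin.prod_univ_four, Matrix.cons_val_zero, Matrix.cons_val_one, Matrix.head_cons,
      Matrix.cons_val_two, Matrix.tail_cons, Matrix.cons_val_three, int_ind, hone]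
    ring
  have hY23 : (∫ u, pairInd s₂ t₂ 2 3 u ∂(Measure.pi fun _ : Fin 4 => μ))
      = cdfOf μ s₂ * cdfOf μ t₂ := by
    have h : (fun u : Fin 4 → ℝ => pairInd s₂ t₂ 2 3 u)
        = fun u => ∏ i, ![fun _ => (1:ℝ), fun _ => 1, ind s₂, ind t₂] i (u i) := by
      funext u
      simp only [pairInd, ind, Fin.prod_univ_four, Matrix.cons_val_zero, Matrix.cons_val_one,
        Matrix.head_cons, Matrix.cons_val_two, Matrix.tail_cons, Matrix.cons_val_three,
        mul_ind, mul_one, one_mul]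
    rw [h, pi_integral4]
    simp only [Fin.prod_univ_four, Matrix.cons_val_zero, Matrix.cons_val_one, Matrix.head_cons,
      Matrix.cons_val_two, Matrix.tail_cons, Matrix.cons_val_three, int_ind, hone]
    ring
  have hP1 : (∫ u, pairInd s₁ t₁ 1 2 u * pairInd s₂ t₂ 0 1 u ∂(Measure.pi fun _ : Fin 4 => μ))
      = cdfOf μ s₂ * cdfOf μ (min s₁ t₂) * cdfOf μ t₁ := by
    have h : (fun u : Fin 4 → ℝ => pairInd s₁ t₁ 1 2 u * pairInd s₂ t₂ 0 1 u)
        = fun u => ∏ i, ![ind s₂, ind (min s₁ t₂), ind t₁, fun _ => (1:ℝ)] i (u i) := by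
      funext u
      simp only [pairInd, ind, Fin.prod_univ_four, Matrix.cons_val_zero, Matrix.cons_val_one,
        Matrix.head_cons, Matrix.cons_val_two, Matrix.tail_cons, Matrix.cons_val_three,
        mul_ind, mul_one, one_mul, le_min_iff]
      exact if_congr (by tauto) rfl rfl
    rw [h, pi_integral4]
    simp only [Fin.prod_univ_four, Matrix.cons_val_zero, Matrix.cons_val_one, Matrix.head_cons,
      Matrix.cons_val_two, Matrix.tail_cons, Matrix.cons_val_three, int_ind, hone]
    ring
  have hP2 : (∫ u, pairInd s₁ t₁ 1 2 u * pairInd s₂ t₂ 1 2 u ∂(Measure.pi fun _ : Fin 4 => μ))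
      = cdfOf μ (min s₁ s₂) * cdfOf μ (min t₁ t₂) := by
    have h : (fun u : Fin 4 → ℝ => pairInd s₁ t₁ 1 2 u * pairInd s₂ t₂ 1 2 u)
        = fun u => ∏ i, ![fun _ => (1:ℝ), ind (min s₁ s₂), ind (min t₁ t₂), fun _ => 1] i (u i) := by
      funext u
      simp only [pairInd, ind, Fin.prod_univ_four, Matrix.cons_val_zero, Matrix.cons_val_one,
        Matrix.head_cons, Matrix.cons_val_two, Matrix.tail_cons, Matrix.cons_val_three,
        mul_ind, mul_one, one_mul, le_min_iff]
      exact if_congr (by tauto) rfl rfl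
    rw [h, pi_integral4]
    simp only [Fin.prod_univ_four, Matrix.cons_val_zero, Matrix.cons_val_one, Matrix.head_cons,
      Matrix.cons_val_two, Matrix.tail_cons, Matrix.cons_val_three, int_ind, hone]
    ring
  have hP3 : (∫ u, pairInd s₁ t₁ 1 2 u * pairInd s₂ t₂ 2 3 u ∂(Measure.pi fun _ : Fin 4 => μ))
      = cdfOf μ s₁ * cdfOf μ (min s₂ t₁) * cdfOf μ t₂ := by
    have h : (fun u : Fin 4 → ℝ => pairInd s₁ t₁ 1 2 u * pairInd s₂ t₂ 2 3 u)
        = fun u => ∏ i, ![fun _ => (1:ℝ), ind s₁, ind (min s₂ t₁), ind t₂] i (u i) := by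
      funext u
      simp only [pairInd, ind, Fin.prod_univ_four, Matrix.cons_val_zero, Matrix.cons_val_one,
        Matrix.head_cons, Matrix.cons_val_two, Matrix.tail_cons, Matrix.cons_val_three,
        mul_ind, mul_one, one_mul, le_min_iff]
      exact if_congr (by tauto) rfl rfl
    rw [h, pi_integral4]
    simp only [Fin.prod_univ_four, Matrix.cons_val_zero, Matrix.cons_val_one, Matrix.head_cons,
      Matrix.cons_val_two, Matrix.tail_cons, Matrix.cons_val_three, int_ind, hone]
    ring
  simp only [cov4, hX, hY01, hY12, hY23, hP1, hP2, hP3]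
  ring
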